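/- The algebra 𝒢 separates the points of the Laakso space L: for any two distinct points p, q ∈ L there exists f ∈ 𝒢 with f(p) ≠ f(q). -/

import Mathlib

open MeasureTheory Set Filter

/-- The value `w(m_1, …, m_l)` of a tuple, encoded as a list `[m_1, …, m_l]`
(so list index `i` corresponds to `m_{i+1}`, and `J i` to `j_{i+1}`):
`w = Σ_{i=1}^{l} m_i ∏_{h=1}^{i} j_h⁻¹`. -/
noncomputable def wLoc (J : ℕ → ℕ) (m : List ℕ) : ℝ :=
  ∑ i ∈ Finset.range m.length,
    (m.getD i 0 : ℝ) * ∏ h ∈ Finset.range (i + 1), ((J h : ℝ))⁻¹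

/-- A tuple `(m_1, …, m_l)` (encoded as a list) is admissible if `l ≥ 1`,
`0 ≤ m_i < j_i` for all `1 ≤ i ≤ l` and `0 < m_l`. -/
def Admissible (J : ℕ → ℕ) (m : List ℕ) : Prop :=
  m ≠ [] ∧ (∀ i, i < m.length → m.getD i 0 < J i) ∧ 0 < m.getD (m.length - 1) 0

/-- `x` is a wormhole location of level `l`. -/
def IsWormhole (J : ℕ → ℕ) (l : ℕ) (x : ℝ) : Prop :=
  ∃ m : List ℕ, m.length = l ∧ Admissible J m ∧ x = wLoc J m

/-- The unit interval `[0,1]`. -/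
abbrev I01 : Type := Set.Icc (0 : ℝ) 1

/-- The Cantor space `K = {0,1}^{ℕ≥1}`; coordinate `i : ℕ` encodes `w_{i+1}`. -/
abbrev Kspace : Type := ℕ → Bool

/-- The relation `R` on `[0,1] × K`: `(x,w) R (x',w')` iff `x = x'`, `x` is a wormhole
location of some level `l ≥ 1`, and `w, w'` differ in coordinate `l` and agree in all
other coordinates (coordinate `l` of the sequence is encoded as index `l - 1`). -/
def laaksoRel (J : ℕ → ℕ) (p q : I01 × Kspace) : Prop :=
  p.1 = q.1 ∧ ∃ l : ℕ, IsWormhole J (l + 1) (p.1 : ℝ) ∧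
    p.2 l ≠ q.2 l ∧ ∀ i, i ≠ l → p.2 i = q.2 i

/-- The Laakso space: the quotient of `[0,1] × K` by the equivalence relation
generated by `laaksoRel`. -/
def Laakso (J : ℕ → ℕ) : Type := Quot (laaksoRel J)

instance (J : ℕ → ℕ) : TopologicalSpace (Laakso J) :=
  inferInstanceAs (TopologicalSpace (Quot (laaksoRel J)))

/-- The relation defining the approximating quantum graph `F_n` on `[0,1] × {0,1}^n`. -/
def graphRel (J : ℕ → ℕ) (n : ℕ) (p q : I01 × (Fin n → Bool)) : Prop :=
  p.1 = q.1 ∧ ∃ l : Fin n, IsWormhole J (l.1 + 1) (p.1 : ℝ) ∧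
    p.2 l ≠ q.2 l ∧ ∀ i, i ≠ l → p.2 i = q.2 i

/-- The approximating quantum graph `F_n`. -/
def FGraph (J : ℕ → ℕ) (n : ℕ) : Type := Quot (graphRel J n)

instance (J : ℕ → ℕ) (n : ℕ) : TopologicalSpace (FGraph J n) :=
  inferInstanceAs (TopologicalSpace (Quot (graphRel J n)))

/-- The projection `[0,1] × {0,1}^{n+1} → [0,1] × {0,1}^n` forgetting the last coordinate. -/
def projMap (n : ℕ) : I01 × (Fin (n + 1) → Bool) → I01 × (Fin n → Bool) :=
  fun p => (p.1, fun i => p.2 i.castSucc)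

/-- The truncation `[0,1] × K → [0,1] × {0,1}^n`, `(x,w) ↦ (x, w_1, …, w_n)`. -/
def truncMap (n : ℕ) : I01 × Kspace → I01 × (Fin n → Bool) :=
  fun p => (p.1, fun i => p.2 i)

/-- Lebesgue measure on `[0,1]`. -/
noncomputable def lebI : Measure I01 := Measure.comap Subtype.val volume

/-- The finite set `{0,1} ∪ {wormhole locations of level at most n}`. -/
def wormholeSet (J : ℕ → ℕ) (n : ℕ) : Set ℝ :=
  {0, 1} ∪ {x : ℝ | ∃ l : ℕ, 1 ≤ l ∧ l ≤ n ∧ IsWormhole J l x}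

/-- The pullback `f ∘ ι` of `f : L → ℝ`, with fixed Cantor coordinate `w`, viewed as a
function of a real variable (via the retraction of `ℝ` onto `[0,1]`; only its values on
subintervals of `[0,1]` are ever used). -/
noncomputable def pull (J : ℕ → ℕ) (f : Laakso J → ℝ) (w : Kspace) (x : ℝ) : ℝ :=
  f (Quot.mk (laaksoRel J) (Set.projIcc (0 : ℝ) 1 zero_le_one x, w))

/-- Membership in `𝒢_n`: `f : L → ℝ` is continuous, its pullback `f∘ι` is constant in the
Cantor direction on each cell `{w : (w_1, …, w_n) = a}` of depth `n` for each fixed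
`x ∈ [0,1]`, and for each fixed `w ∈ K` it is continuously differentiable (with one-sided
derivatives at the endpoints) on each closed subinterval of `[0,1]` whose endpoints are
consecutive points of the finite set `{0,1} ∪ {wormhole locations of level ≤ n}`. -/
def InG (J : ℕ → ℕ) (n : ℕ) (f : Laakso J → ℝ) : Prop :=
  Continuous f ∧
  (∀ (x : I01) (w w' : Kspace), (∀ i, i < n → w i = w' i) →
    f (Quot.mk (laaksoRel J) (x, w)) = f (Quot.mk (laaksoRel J) (x, w'))) ∧
  (∀ (w : Kspace) (a b : ℝ), a ∈ wormholeSet J n → b ∈ wormholeSet J n → a < b →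
    (∀ s ∈ wormholeSet J n, ¬(a < s ∧ s < b)) →
    ContDiffOn ℝ 1 (pull J f w) (Set.Icc a b))


section Aux

variable {J : ℕ → ℕ}

/-- The real product `∏_{h < n} (J h)⁻¹`. -/
noncomputable def Qr (J : ℕ → ℕ) (n : ℕ) : ℝ := ∏ h ∈ Finset.range n, ((J h : ℝ))⁻¹

lemma wLoc_nonneg (m : List ℕ) : 0 ≤ wLoc J m :=
  Finset.sum_nonneg fun i _ => mul_nonneg (Nat.cast_nonneg _)
    (Finset.prod_nonneg fun _ _ => inv_nonneg.2 (Nat.cast_nonneg _))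

lemma Jpos (hJ2 : ∀ h, 2 ≤ J h) (h : ℕ) : (0 : ℝ) < (J h : ℝ) := by
  exact_mod_cast Nat.lt_of_lt_of_le Nat.zero_lt_two (hJ2 h)

lemma wLoc_le_one (hJ2 : ∀ h, 2 ≤ J h) {m : List ℕ}
    (hm : ∀ i, i < m.length → m.getD i 0 < J i) : wLoc J m ≤ 1 := by
  have key : wLoc J m ≤ ∑ i ∈ Finset.range m.length, (Qr J i - Qr J (i + 1)) := by
    refine Finset.sum_le_sum fun i hi => ?_
    have hi' := Finset.mem_range.mp hi
    have hJp := Jpos hJ2 i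
    have hQ : Qr J (i + 1) = Qr J i * ((J i : ℝ))⁻¹ := Finset.prod_range_succ _ _
    have hdig : (m.getD i 0 : ℝ) ≤ (J i : ℝ) - 1 := by
      have := hm i hi'; have : (m.getD i 0 : ℕ) + 1 ≤ J i := this
      have := (Nat.cast_le (α := ℝ)).2 this; push_cast at this; linarith
    have hQnn : 0 ≤ Qr J (i + 1) :=
      Finset.prod_nonneg fun _ _ => inv_nonneg.2 (Nat.cast_nonneg _)
    have h1 : (m.getD i 0 : ℝ) * Qr J (i + 1) ≤ ((J i : ℝ) - 1) * Qr J (i + 1) :=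
      mul_le_mul_of_nonneg_right hdig hQnn
    have h2 : ((J i : ℝ) - 1) * Qr J (i + 1) = Qr J i - Qr J (i + 1) := by
      rw [hQ]; field_simp
    calc (m.getD i 0 : ℝ) * ∏ h ∈ Finset.range (i + 1), ((J h : ℝ))⁻¹
        = (m.getD i 0 : ℝ) * Qr J (i + 1) := rfl
      _ ≤ ((J i : ℝ) - 1) * Qr J (i + 1) := h1
      _ = Qr J i - Qr J (i + 1) := h2
  have htel : ∑ i ∈ Finset.range m.length, (Qr J i - Qr J (i + 1))
      = Qr J 0 - Qr J m.length := Finset.sum_range_sub' (Qr J) m.length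
  have hQ0 : Qr J 0 = 1 := Finset.prod_range_zero _
  have hQnn : 0 ≤ Qr J m.length :=
    Finset.prod_nonneg fun _ _ => inv_nonneg.2 (Nat.cast_nonneg _)
  calc wLoc J m ≤ Qr J 0 - Qr J m.length := by rw [← htel]; exact key
    _ ≤ 1 := by rw [hQ0]; linarith

/-- Integer numerator of `wLoc`. -/
def intVal (J : ℕ → ℕ) (m : List ℕ) : ℕ :=
  ∑ i ∈ Finset.range m.length, m.getD i 0 * ∏ h ∈ Finset.Ico (i + 1) m.length, J h

lemma wLoc_mul (hJ2 : ∀ h, 2 ≤ J h) (m : List ℕ) :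
    wLoc J m * (∏ h ∈ Finset.range m.length, (J h : ℝ)) = (intVal J m : ℝ) := by
  unfold wLoc intVal
  push_cast
  rw [Finset.sum_mul]
  refine Finset.sum_congr rfl fun i hi => ?_
  have hi' := Finset.mem_range.mp hi
  rw [← Finset.prod_range_mul_prod_Ico (fun h => (J h : ℝ)) (by omega : i + 1 ≤ m.length),
    Finset.prod_inv_distrib]
  have hne : (∏ h ∈ Finset.range (i + 1), (J h : ℝ)) ≠ 0 :=
    Finset.prod_ne_zero_iff.2 fun h _ => ne_of_gt (Jpos hJ2 h)
  field_simp

lemma level_lt_absurd (hJ2 : ∀ h, 2 ≤ J h) {m m' : List ℕ}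
    (hm : Admissible J m) (hm' : Admissible J m') (hlen : m.length < m'.length)
    (heq : wLoc J m = wLoc J m') : False := by
  set l := m.length with hl
  set l' := m'.length with hl'
  have h1 := wLoc_mul (J := J) hJ2 m
  have h2 := wLoc_mul (J := J) hJ2 m'
  have hsplit : (∏ h ∈ Finset.range l', (J h : ℝ))
      = (∏ h ∈ Finset.range l, (J h : ℝ)) * ∏ h ∈ Finset.Ico l l', (J h : ℝ) :=
    (Finset.prod_range_mul_prod_Ico (fun h => (J h : ℝ)) (le_of_lt hlen)).symm
  have key : (intVal J m' : ℝ) = (intVal J m : ℝ) * ∏ h ∈ Finset.Ico l l', (J h : ℝ) := by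
    rw [← h2, ← heq, hsplit, ← mul_assoc, h1]
  have keyN : intVal J m' = intVal J m * ∏ h ∈ Finset.Ico l l', J h := by
    have hcast : ((intVal J m' : ℕ) : ℝ)
        = ((intVal J m * ∏ h ∈ Finset.Ico l l', J h : ℕ) : ℝ) := by
      push_cast; rw [key]
    exact_mod_cast hcast
  have l'pos : 1 ≤ l' := by
    have := hm'.1
    rcases m' with _ | _
    · exact absurd rfl this
    · simp [hl']
  have hmem : l' - 1 ∈ Finset.Ico l l' := Finset.mem_Ico.2 ⟨by omega, by omega⟩
  have hdvd : J (l' - 1) ∣ intVal J m' := by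
    rw [keyN]
    exact Dvd.dvd.mul_left (Finset.dvd_prod_of_mem J hmem) _
  have hdecomp : intVal J m'
      = (∑ i ∈ Finset.range (l' - 1), m'.getD i 0 * ∏ h ∈ Finset.Ico (i + 1) l', J h)
        + m'.getD (l' - 1) 0 := by
    unfold intVal
    rw [← hl']
    rw [show l' = (l' - 1) + 1 by omega, Finset.sum_range_succ]
    have he : Finset.Ico ((l' - 1) + 1) ((l' - 1) + 1) = ∅ := Finset.Ico_self _
    rw [he, Finset.prod_empty, mul_one]
    congr 2 <;> omega
  have hdS : J (l' - 1) ∣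
      ∑ i ∈ Finset.range (l' - 1), m'.getD i 0 * ∏ h ∈ Finset.Ico (i + 1) l', J h := by
    refine Finset.dvd_sum fun i hi => ?_
    have hi' := Finset.mem_range.mp hi
    exact Dvd.dvd.mul_left
      (Finset.dvd_prod_of_mem J (Finset.mem_Ico.2 ⟨by omega, by omega⟩)) _
  have hdlast : J (l' - 1) ∣ m'.getD (l' - 1) 0 := by
    rw [hdecomp] at hdvd
    exact (Nat.dvd_add_right hdS).mp hdvd
  have hpos : 0 < m'.getD (l' - 1) 0 := hm'.2.2
  have hlt : m'.getD (l' - 1) 0 < J (l' - 1) := hm'.2.1 _ (by omega)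
  have := Nat.eq_zero_of_dvd_of_lt hdlast hlt
  omega

lemma level_unique (hJ2 : ∀ h, 2 ≤ J h) {l l' : ℕ} {x : ℝ}
    (h : IsWormhole J l x) (h' : IsWormhole J l' x) : l = l' := by
  obtain ⟨m, hml, hma, hmx⟩ := h
  obtain ⟨m', hml', hma', hmx'⟩ := h'
  rcases lt_trichotomy m.length m'.length with hlt | heq | hgt
  · exact absurd (hmx ▸ hmx' : wLoc J m = wLoc J m')
      (fun hh => level_lt_absurd hJ2 hma hma' hlt hh)
  · omega
  · exact absurd (hmx' ▸ hmx : wLoc J m' = wLoc J m)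
      (fun hh => level_lt_absurd hJ2 hma' hma hgt hh)

lemma worm_finite (J : ℕ → ℕ) (n : ℕ) : {x : ℝ | IsWormhole J n x}.Finite := by
  classical
  set B := (∑ i ∈ Finset.range n, J i) + 1 with hB
  apply Set.Finite.subset (Set.finite_range
    (fun v : Fin n → Fin B => ∑ i : Fin n,
      ((v i : ℕ) : ℝ) * ∏ h ∈ Finset.range ((i : ℕ) + 1), ((J h : ℝ))⁻¹))
  rintro x ⟨m, hlen, ⟨-, hdig, -⟩, rfl⟩
  have hvb : ∀ i : Fin n, m.getD (i : ℕ) 0 < B := by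
    intro i
    have h1 : m.getD (i : ℕ) 0 < J (i : ℕ) := hdig _ (by omega)
    have h2 : J (i : ℕ) ≤ ∑ i ∈ Finset.range n, J i :=
      Finset.single_le_sum (fun _ _ => Nat.zero_le _) (Finset.mem_range.2 i.2)
    omega
  refine ⟨fun i => ⟨m.getD (i : ℕ) 0, hvb i⟩, ?_⟩
  show (∑ i : Fin n, (m.getD (i : ℕ) 0 : ℝ) * ∏ h ∈ Finset.range ((i : ℕ) + 1), ((J h : ℝ))⁻¹)
      = wLoc J m
  unfold wLoc
  rw [hlen]
  exact Fin.sum_univ_eq_sum_range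
    (fun i => (m.getD i 0 : ℝ) * ∏ h ∈ Finset.range (i + 1), ((J h : ℝ))⁻¹) n

lemma wormSet_subset (hJ2 : ∀ h, 2 ≤ J h) (n : ℕ) :
    wormholeSet J n ⊆ Set.Icc (0 : ℝ) 1 := by
  rintro x (h01 | ⟨l, -, -, m, -, ⟨-, hdig, -⟩, rfl⟩)
  · rcases h01 with rfl | h
    · exact ⟨le_refl _, zero_le_one⟩
    · rw [Set.mem_singleton_iff] at h; subst h; exact ⟨zero_le_one, le_refl _⟩
  · exact ⟨wLoc_nonneg m, wLoc_le_one hJ2 hdig⟩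

lemma contDiff_prod_sub (S : Finset ℝ) :
    ContDiff ℝ 1 (fun y : ℝ => ∏ z ∈ S, (y - z)) := by
  classical
  induction S using Finset.induction_on with
  | empty => simpa using contDiff_const (c := (1 : ℝ))
  | @insert a s hz ih =>
      simp only [Finset.prod_insert hz]
      exact (contDiff_id.sub contDiff_const).mul ih

lemma keyA (J : ℕ → ℕ) (x x' : I01) (w w' : Kspace) (hx : x ≠ x') :
    ∃ (n : ℕ) (f : Laakso J → ℝ), InG J n f ∧
      f (Quot.mk (laaksoRel J) (x, w)) ≠ f (Quot.mk (laaksoRel J) (x', w')) := by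
  refine ⟨0, Quot.lift (fun p => ((p.1 : ℝ))) (fun a b hab => congrArg (fun y : I01 => (y : ℝ)) hab.1), ⟨?_, ?_, ?_⟩, ?_⟩
  · exact continuous_quot_lift _ (continuous_subtype_val.comp continuous_fst)
  · intro _ _ _ _; rfl
  · intro w0 a b ha hb hab _
    have hchar : ∀ y ∈ wormholeSet J 0, y = 0 ∨ y = 1 := by
      rintro y (h01 | ⟨l, h1, h2, -⟩)
      · rcases h01 with rfl | h
        · exact Or.inl rfl
        · rw [Set.mem_singleton_iff] at h; exact Or.inr h
      · omega
    have ha' := hchar a ha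
    have hb' := hchar b hb
    have hab' : a = 0 ∧ b = 1 := by
      rcases ha' with rfl | rfl <;> rcases hb' with rfl | rfl <;> (norm_num at hab) <;> norm_num
    obtain ⟨rfl, rfl⟩ := hab'
    refine contDiffOn_id.congr fun y hy => ?_
    show ((Set.projIcc (0 : ℝ) 1 zero_le_one y : I01) : ℝ) = y
    rw [Set.projIcc_of_mem zero_le_one hy]
  · intro h
    exact hx (Subtype.ext h)

lemma keyB (J : ℕ → ℕ) (hJ2 : ∀ h, 2 ≤ J h) (x : I01) (w w' : Kspace) (l : ℕ)
    (hne : w l ≠ w' l) (hnw : ¬ IsWormhole J (l + 1) (x : ℝ)) :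
    ∃ (n : ℕ) (f : Laakso J → ℝ), InG J n f ∧
      f (Quot.mk (laaksoRel J) (x, w)) ≠ f (Quot.mk (laaksoRel J) (x, w')) := by
  classical
  have hWfin := worm_finite J (l + 1)
  set Wf : Finset ℝ := hWfin.toFinset with hWfdef
  set g : ℝ → ℝ := fun y => ∏ z ∈ Wf, (y - z) with hgdef
  set s : Bool → ℝ := fun b => if b then 1 else -1 with hsdef
  have hg0 : ∀ y : ℝ, IsWormhole J (l + 1) y → g y = 0 := fun y hy =>
    Finset.prod_eq_zero (hWfin.mem_toFinset.mpr hy) (sub_self y)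
  have hgx : g (x : ℝ) ≠ 0 := by
    rw [hgdef]
    refine Finset.prod_ne_zero_iff.2 fun z hz => sub_ne_zero.2 fun hxz => ?_
    exact hnw (hxz ▸ hWfin.mem_toFinset.mp hz)
  have resp : ∀ a b : I01 × Kspace, laaksoRel J a b →
      g (a.1 : ℝ) * s (a.2 l) = g (b.1 : ℝ) * s (b.2 l) := by
    rintro a b ⟨h1, m, hm, hmne, hmag⟩
    by_cases hml : m = l
    · subst hml
      rw [← h1, hg0 _ hm, zero_mul, zero_mul]
    · rw [← h1, hmag l (fun h => hml h.symm)]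
  refine ⟨l + 1, Quot.lift (fun p => g (p.1 : ℝ) * s (p.2 l)) resp, ⟨?_, ?_, ?_⟩, ?_⟩
  · apply continuous_quot_lift
    have hs2 : Continuous fun p : I01 × Kspace => s (p.2 l) := by
      have hcomp : (fun p : I01 × Kspace => s (p.2 l)) = s ∘ (fun p => p.2 l) := rfl
      rw [hcomp]
      exact continuous_of_discreteTopology.comp ((continuous_apply l).comp continuous_snd)
    exact (((contDiff_prod_sub Wf).continuous).comp
      (continuous_subtype_val.comp continuous_fst)).mul hs2
  · intro x0 w0 w0' hag
    show g (x0 : ℝ) * s (w0 l) = g (x0 : ℝ) * s (w0' l)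
    rw [hag l (Nat.lt_succ_self l)]
  · intro w0 a b ha hb hab hcons
    have hsub : Set.Icc a b ⊆ Set.Icc (0 : ℝ) 1 :=
      Set.Icc_subset_Icc ((wormSet_subset hJ2 _ ha)).1 ((wormSet_subset hJ2 _ hb)).2
    have hcd : ContDiff ℝ 1 (fun y : ℝ => g y * s (w0 l)) :=
      (contDiff_prod_sub Wf).mul contDiff_const
    refine hcd.contDiffOn.congr fun y hy => ?_
    have hy' := hsub hy
    show g ((Set.projIcc (0 : ℝ) 1 zero_le_one y : I01) : ℝ) * s (w0 l) = g y * s (w0 l)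
    rw [Set.projIcc_of_mem zero_le_one hy']
  · show g (x : ℝ) * s (w l) ≠ g (x : ℝ) * s (w' l)
    intro h
    have hss := mul_left_cancel₀ hgx h
    apply hne
    revert hss
    rw [hsdef]
    cases w l <;> cases w' l <;> simp <;> norm_num

/-- the algebra `𝒢 = ⋃_n 𝒢_n` separates the points of the Laakso space. -/
theorem stmt7 (t : ℝ) (j : ℕ) (J : ℕ → ℕ)
    (ht : t ∈ Set.Ioo (0 : ℝ) (1 / 2)) (hj : 2 ≤ j)
    (hjt : 1 / ((j : ℝ) + 1) < t ∧ t ≤ 1 / (j : ℝ))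
    (hJ : ∀ i, J i = j ∨ J i = j + 1) :
    ∀ p q : Laakso J, p ≠ q → ∃ (n : ℕ) (f : Laakso J → ℝ), InG J n f ∧ f p ≠ f q := by
  have hJ2 : ∀ h, 2 ≤ J h := fun h => by rcases hJ h with h' | h' <;> omega
  intro p q hpq
  obtain ⟨⟨x, w⟩, rfl⟩ := Quot.exists_rep p
  obtain ⟨⟨x', w'⟩, rfl⟩ := Quot.exists_rep q
  by_cases hx : x = x'
  · subst hx
    have hww : w ≠ w' := fun h => hpq (by rw [h])
    obtain ⟨l, hl⟩ := Function.ne_iff.mp hww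
    by_cases hwh : IsWormhole J (l + 1) (x : ℝ)
    · set w2 : Kspace := Function.update w l (w' l) with hw2
      have hw2l : w2 l = w' l := Function.update_self l (w' l) w
      have hrel : laaksoRel J (x, w) (x, w2) :=
        ⟨rfl, l, hwh, by show w l ≠ w2 l; rw [hw2l]; exact hl,
          fun i hi => (Function.update_of_ne hi (w' l) w).symm⟩
      have hpq2 : Quot.mk (laaksoRel J) (x, w) = Quot.mk (laaksoRel J) (x, w2) :=
        Quot.sound hrel
      have hww2 : w2 ≠ w' := fun h => hpq (by rw [hpq2, h])
      obtain ⟨l', hl'⟩ := Function.ne_iff.mp hww2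
      have hll : l' ≠ l := fun h => hl' (by subst h; exact hw2l)
      have hnw : ¬ IsWormhole J (l' + 1) (x : ℝ) := fun h => hll (by
        have := level_unique hJ2 h hwh; omega)
      obtain ⟨n, f, hf, hfn⟩ := keyB J hJ2 x w2 w' l' hl' hnw
      exact ⟨n, f, hf, by rw [hpq2]; exact hfn⟩
    · exact keyB J hJ2 x w w' l hl hwh
  · exact keyA J x x' w w' hx
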